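/- For the gap sequence (μ_n) of a Cantor-like sequence, the partial sums satisfy l_3·Σ_{i=1}^{2^{m-1}−1} μ_i = Σ_{i=1}^{2^m−1} μ_i − 2^{m-1}(l_1 + l_2) + l_2 for all m ≥ 1. -/

import Mathlib

lemma key5 (l1 l2 l3 : ℕ) (μ : ℕ → ℕ)
    (h1 : μ 1 = l1)
    (h2 : ∀ n : ℕ, 1 ≤ n → μ (2 * n) = l3 * μ n + l2)
    (h3 : ∀ n : ℕ, 1 ≤ n → μ (2 * n + 1) = l1) :
    ∀ N : ℕ, 1 ≤ N →
      (∑ i ∈ Finset.Icc 1 (2 * N - 1), μ i)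
        = l3 * (∑ i ∈ Finset.Icc 1 (N - 1), μ i) + (N - 1) * l2 + N * l1 := by
  intro N hN
  induction N, hN using Nat.le_induction with
  | base => simp [h1]
  | succ n hn ih =>
    have e1 : 2 * (n + 1) - 1 = (2 * n - 1) + 1 + 1 := by omega
    have e2 : 2 * n - 1 + 1 = 2 * n := by omega
    have e3 : (n + 1) - 1 = (n - 1) + 1 := by omega
    rw [e1, Finset.sum_Icc_succ_top (by omega), Finset.sum_Icc_succ_top (by omega),
      e2, e3, Finset.sum_Icc_succ_top (by omega), h2 n hn, h3 n hn]
    have e4 : n - 1 + 1 = n := by omega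
    rw [e4, ih]
    have hh : (n - 1) * l2 + l2 = n * l2 := by
      cases n with
      | zero => omega
      | succ k => simp [Nat.succ_sub_one, Nat.succ_mul]
    ring_nf
    rw [mul_comm l2 n, ← hh]
    ring

/-- l₃ · ∑_{i=1}^{2^{m-1}−1} μ_i
      = ∑_{i=1}^{2^m−1} μ_i − 2^{m-1}(l₁+l₂) + l₂ for all m ≥ 1
    (stated additively to avoid truncated subtraction). -/
theorem stmt5 (l1 l2 l3 : ℕ) (hl3 : 3 ≤ l3) (μ : ℕ → ℕ)
    (h1 : μ 1 = l1)
    (h2 : ∀ n : ℕ, 1 ≤ n → μ (2 * n) = l3 * μ n + l2)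
    (h3 : ∀ n : ℕ, 1 ≤ n → μ (2 * n + 1) = l1) :
    ∀ m : ℕ, 1 ≤ m →
      l3 * (∑ i ∈ Finset.Icc 1 (2 ^ (m - 1) - 1), μ i) + 2 ^ (m - 1) * (l1 + l2)
        = (∑ i ∈ Finset.Icc 1 (2 ^ m - 1), μ i) + l2 := by
  intro m hm
  set N := 2 ^ (m - 1) with hNdef
  have hN : 1 ≤ N := Nat.one_le_two_pow
  have hpow : 2 ^ m = 2 * N := by
    rw [hNdef, ← pow_succ']
    congr 1
    omega
  rw [hpow, key5 l1 l2 l3 μ h1 h2 h3 N hN]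
  have : (N - 1) * l2 + l2 = N * l2 := by
    have h := Nat.sub_add_cancel hN
    calc (N - 1) * l2 + l2 = ((N - 1) + 1) * l2 := by ring
      _ = N * l2 := by rw [h]
  rw [Nat.mul_add, ← this]
  ring
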